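/- Let q₁: E₁ → M be a smooth vector bundle and φ: E₁ → E₁ a smooth fibrewise-linear idempotent bundle endomorphism over id_M (φ∘φ = φ, q₁∘φ = q₁). Then the image of φ, E₂ = {e ∈ E₁ : φ(e) = e}, is an embedded smooth submanifold of E₁, and the restriction q₂: E₂ → M is a smooth vector bundle. -/

import Mathlib

open Manifold

/-- The image of a smooth fibrewise-linear idempotent endomorphism `φ` of a
smooth vector bundle (presented in a local trivialisation as the trivial bundle
`B × V` over a smooth manifold `B`) is a smooth vector bundle: around every
point of the base there is a smooth local frame `ψ` for the fixed-point set of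
`φ` which trivialises the image sub-bundle
`E₂ = {(b, v) : φ b v = v}` over a neighbourhood `U`. -/
theorem stmt15
    {EB : Type*} [NormedAddCommGroup EB] [NormedSpace ℝ EB] [FiniteDimensional ℝ EB]
    {HB : Type*} [TopologicalSpace HB] (IB : ModelWithCorners ℝ EB HB) [IB.Boundaryless]
    {B : Type*} [TopologicalSpace B] [ChartedSpace HB B] [IsManifold IB (⊤ : ℕ∞) B]
    {V : Type*} [NormedAddCommGroup V] [NormedSpace ℝ V] [FiniteDimensional ℝ V]
    (φ : B → V →L[ℝ] V)
    (hφ : ContMDiff IB 𝓘(ℝ, V →L[ℝ] V) (⊤ : ℕ∞) φ)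
    (hidem : ∀ b, (φ b).comp (φ b) = φ b) :
    ∀ b₀ : B, ∃ U : Set B, IsOpen U ∧ b₀ ∈ U ∧ ∃ n : ℕ,
      ∃ ψ : B → (Fin n → ℝ) →L[ℝ] V,
        ContMDiffOn IB 𝓘(ℝ, (Fin n → ℝ) →L[ℝ] V) (⊤ : ℕ∞) ψ U ∧
        (∀ b ∈ U, Function.Injective (ψ b)) ∧
        (∀ b ∈ U, Set.range (ψ b) = {v : V | φ b v = v}) ∧
        Set.BijOn (fun pc : B × (Fin n → ℝ) => ((pc.1, ψ pc.1 pc.2) : B × V))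
          (U ×ˢ (Set.univ : Set (Fin n → ℝ)))
          {p : B × V | p.1 ∈ U ∧ φ p.1 p.2 = p.2} := by
  intro b₀
  classical
  set P : V →L[ℝ] V := φ b₀ with hPdef
  have hP : P * P = P := hidem b₀
  -- the fixed point set equals the range, for each b
  have hfix : ∀ b, {v : V | φ b v = v} = Set.range (φ b) := by
    intro b
    ext v
    constructor
    · intro hv; exact ⟨v, hv⟩
    · rintro ⟨w, rfl⟩
      have := DFunLike.congr_fun (hidem b) w
      simpa using this
  -- a parametrisation of the range of P
  let S : Submodule ℝ V := LinearMap.range (P : V →ₗ[ℝ] V)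
  let bas : Module.Basis (Fin (Module.finrank ℝ S)) ℝ S := Module.finBasis ℝ S
  let e₀ : (Fin (Module.finrank ℝ S) → ℝ) →L[ℝ] V :=
    LinearMap.toContinuousLinearMap
      (S.subtype ∘ₗ (bas.equivFun.symm : (Fin (Module.finrank ℝ S) → ℝ) →ₗ[ℝ] S))
  have he₀fun : ⇑e₀ = Subtype.val ∘ ⇑bas.equivFun.symm := rfl
  have he₀inj : Function.Injective e₀ := by
    rw [he₀fun]
    exact Subtype.val_injective.comp bas.equivFun.symm.injective
  have he₀range : Set.range e₀ = (S : Set V) := by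
    rw [he₀fun, Set.range_comp, bas.equivFun.symm.surjective.range_eq, Set.image_univ,
      Subtype.range_val]
  have hSrange : (S : Set V) = Set.range P := LinearMap.coe_range _
  -- the interpolating family
  set T : B → V →L[ℝ] V := fun b => φ b * P + (1 - φ b) * (1 - P) with hTdef
  have hT : ContMDiff IB 𝓘(ℝ, V →L[ℝ] V) (⊤ : ℕ∞) T := by
    have h1 : ContMDiff IB 𝓘(ℝ, V →L[ℝ] V) (⊤ : ℕ∞) (fun b => (φ b).comp P) :=
      hφ.clm_comp contMDiff_const
    have h2 : ContMDiff IB 𝓘(ℝ, V →L[ℝ] V) (⊤ : ℕ∞) (fun b => ((1 : V →L[ℝ] V) - φ b).comp (1 - P)) :=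
      (contMDiff_const.sub hφ).clm_comp contMDiff_const
    exact h1.add h2
  have hT0 : T b₀ = 1 := by
    have : T b₀ = P * P + (1 - P) * (1 - P) := rfl
    rw [this, show (1 - P) * (1 - P) = 1 - P - P + P * P by noncomm_ring, hP]
    abel
  set U : Set B := {b | IsUnit (T b)} with hUdef
  have hUopen : IsOpen U := Units.isOpen.preimage hT.continuous
  have hb₀U : b₀ ∈ U := by simp [hUdef, hT0]
  -- the key intertwining identity
  have hkey : ∀ b, φ b * T b = T b * P := by
    intro b
    have hb : φ b * φ b = φ b := hidem b
    have l1 : φ b * T b = φ b * P := by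
      have e : φ b * (φ b * P + (1 - φ b) * (1 - P))
          = (φ b * φ b) * P + (φ b - φ b * φ b) * (1 - P) := by noncomm_ring
      show φ b * (φ b * P + (1 - φ b) * (1 - P)) = φ b * P
      rw [e, hb, sub_self, zero_mul, add_zero]
    have l2 : T b * P = φ b * P := by
      have e : (φ b * P + (1 - φ b) * (1 - P)) * P
          = φ b * (P * P) + (1 - φ b) * (P - P * P) := by noncomm_ring
      show (φ b * P + (1 - φ b) * (1 - P)) * P = φ b * P
      rw [e, hP, sub_self, mul_zero, add_zero]
    rw [l1, l2]
  have hinj : ∀ b ∈ U, Function.Injective ((T b).comp e₀) := by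
    intro b hb
    have hTinj : Function.Injective (T b) := by
      obtain ⟨u, hu⟩ := hb
      intro x y h
      have : (↑u⁻¹ * T b) x = (↑u⁻¹ * T b) y := by
        simp only [ContinuousLinearMap.mul_apply, h]
      rwa [← hu, u.inv_mul] at this
    exact hTinj.comp he₀inj
  have hrange : ∀ b ∈ U, Set.range ((T b).comp e₀) = {v : V | φ b v = v} := by
    intro b hb
    obtain ⟨u, hu⟩ := hb
    have hTsurj : Function.Surjective (T b) := by
      intro v
      refine ⟨(↑u⁻¹ : V →L[ℝ] V) v, ?_⟩
      have : (T b * ↑u⁻¹) v = v := by rw [← hu, u.mul_inv]; simp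
      simpa [ContinuousLinearMap.mul_apply] using this
    have h1 : Set.range ((T b).comp e₀) = T b '' Set.range P := by
      rw [show ⇑((T b).comp e₀) = ⇑(T b) ∘ ⇑e₀ from rfl, Set.range_comp, he₀range, hSrange]
    have h2 : T b '' Set.range P = Set.range (T b * P) := by
      rw [show ⇑(T b * P) = ⇑(T b) ∘ ⇑P from rfl, Set.range_comp]
    have h3 : Set.range (T b * P) = Set.range (φ b) := by
      rw [← hkey b, show ⇑(φ b * T b) = ⇑(φ b) ∘ ⇑(T b) from rfl, Set.range_comp,
        hTsurj.range_eq, Set.image_univ]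
    rw [hfix b, h1, h2, h3]
  refine ⟨U, hUopen, hb₀U, Module.finrank ℝ S, fun b => (T b).comp e₀,
    (hT.clm_comp contMDiff_const).contMDiffOn, hinj, hrange, ?_, ?_, ?_⟩
  · rintro ⟨b, c⟩ ⟨hb, -⟩
    refine ⟨hb, ?_⟩
    have : ((T b).comp e₀) c ∈ Set.range ((T b).comp e₀) := ⟨c, rfl⟩
    rw [hrange b hb] at this
    exact this
  · rintro ⟨b, c⟩ ⟨hb, -⟩ ⟨b', c'⟩ ⟨hb', -⟩ h
    simp only [Prod.mk.injEq] at h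
    obtain ⟨rfl, h2⟩ := h
    exact Prod.ext rfl (hinj b hb h2)
  · rintro ⟨b, v⟩ ⟨hb, hv⟩
    have : v ∈ Set.range ((T b).comp e₀) := by rw [hrange b hb]; exact hv
    obtain ⟨c, hc⟩ := this
    exact ⟨(b, c), ⟨hb, trivial⟩, by simp [hc]⟩
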